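/- Let q ≥ 3 be an integer. There exists a constant C > 0 (depending only on q) such that for all real H ≥ 1, all integers r, d, m ≥ 1 with rd ≤ H, and every real Y with m ≤ Y: |𝔞*_H(r²m, rd)| ≤ C·( Y^{1/2} / (r^{1/2}·m^{3/4}·H) )·#{(a,b) ∈ ℤ² : a²+b² = m, a ≠ 0, d∣b}·𝟙_{r²m ≤ 2H²}, and the same bound holds for |𝔡*_H(r²m, rd)|. -/

import Mathlib

open Real MeasureTheory Finset ArithmeticFunction

noncomputable section

namespace Gath

/-- Number of lattice points in the Heisenberg dilate `δ_x B` of the unit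
Cygan–Korányi ball: `#{(z,z') ∈ ℤ^{2q} × ℤ : |z|₂⁴ + z'² ≤ x⁴}`. -/
def latticeCount (q : ℕ) (x : ℝ) : ℝ :=
  Set.ncard {p : (Fin (2*q) → ℤ) × ℤ |
    (((∑ i, (p.1 i)^2)^2 + p.2^2 : ℤ) : ℝ) ≤ x^4}

/-- Volume of the unit Cygan–Korányi ball `B ⊆ ℝ^{2q} × ℝ`. -/
def ballVol (q : ℕ) : ℝ :=
  (volume {p : (Fin (2*q) → ℝ) × ℝ | (∑ i, (p.1 i)^2)^2 + p.2^2 ≤ 1}).toReal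

/-- The error term `𝓔_q(x)`. -/
def errE (q : ℕ) (x : ℝ) : ℝ := latticeCount q x - ballVol q * x^(2*q+2)

/-- `r_{2q}(m)`: number of representations of `m` as a sum of `2q` squares. -/
def r2q (q m : ℕ) : ℝ :=
  Set.ncard {a : Fin (2*q) → ℤ | ∑ i, (a i)^2 = (m:ℤ)}

/-- The nontrivial Dirichlet character mod 4 (real-valued). -/
def chi4 (n : ℤ) : ℝ := ((ZMod.χ₄ (n : ZMod 4) : ℤ) : ℝ)

/-- Pairs `(a,b) ∈ ℤ²` with `a² + b² = m` and `d ∣ b`. -/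
def repPairs (m d : ℕ) : Finset (ℤ × ℤ) :=
  ((Finset.Icc (-(m:ℤ)) (m:ℤ)) ×ˢ (Finset.Icc (-(m:ℤ)) (m:ℤ))).filter
    (fun p => p.1^2 + p.2^2 = (m:ℤ) ∧ (d:ℤ) ∣ p.2)

/-- `r₂(m,d;q) = Σ_{a²+b²=m, d∣b} (|a|/√m)^{q-1}`. -/
def r2w (q m d : ℕ) : ℝ :=
  ∑ p ∈ repPairs m d, (|(p.1 : ℝ)| / Real.sqrt m)^(q-1)

/-- `r_{2,χ}(m,d;q) = Σ_{a²+b²=m, d∣b} χ(|a|)·(|a|/√m)^{q-1}`. -/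
def r2wchi (q m d : ℕ) : ℝ :=
  ∑ p ∈ repPairs m d, chi4 |p.1| * (|(p.1 : ℝ)| / Real.sqrt m)^(q-1)

/-- `c_q = (2^{4q-1} - 1)/(4q - 1)`. -/
def cQ (q : ℕ) : ℝ := ((2:ℝ)^(4*q-1) - 1) / (4*q-1)

/-- `γ_q = (c_q/2)·(π^{q-1}/(2Γ(q)))²`. -/
def gammaQ (q : ℕ) : ℝ := cQ q / 2 * (π^(q-1) / (2*Real.Gamma q))^2

/-- `ζ(q) = Σ_{n≥1} 1/n^q`. -/
def zetaR (q : ℕ) : ℝ := ∑' n : ℕ, 1/((n:ℝ)+1)^q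

/-- `L(q,χ) = Σ_{n≥1} χ(n)/n^q`. -/
def LchiR (q : ℕ) : ℝ := ∑' n : ℕ, chi4 ((n:ℤ)+1)/((n:ℝ)+1)^q

/-- `ϱ_q = π^q/((1-2^{-q})Γ(q)ζ(q))`. -/
def rhoQ (q : ℕ) : ℝ := π^q / ((1 - ((2:ℝ)⁻¹)^q) * Real.Gamma q * zetaR q)

/-- `ϱ_{χ,q} = π^q/(2^{q-1}Γ(q)L(q,χ))`. -/
def rhoChiQ (q : ℕ) : ℝ := π^q / ((2:ℝ)^(q-1) * Real.Gamma q * LchiR q)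

/-- `ξ(d) = 𝟙_{d odd} + (-1)^{q/2+1}𝟙_{d even} + (-1)^{q/2}·2^q·𝟙_{4∣d}`. -/
def xiQ (q d : ℕ) : ℝ :=
  (if d % 2 = 1 then (1:ℝ) else 0) + (-1:ℝ)^(q/2+1) * (if d % 2 = 0 then 1 else 0)
    + (-1:ℝ)^(q/2) * 2^q * (if d % 4 = 0 then 1 else 0)

/-- The sawtooth function `ψ(t) = t - ⌊t⌋ - 1/2`. -/
def sawtooth (t : ℝ) : ℝ := Int.fract t - 1/2

/-- `𝔣(t) = √(1-t²)`. -/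
def ff (t : ℝ) : ℝ := Real.sqrt (1 - t^2)

/-- `𝔤(t) = (1-t²)^{(q-1)/2}`. -/
def gg (q : ℕ) (t : ℝ) : ℝ := (1 - t^2)^(((q:ℝ)-1)/2)

/-- `𝔤̂(t) = t^{q-1}`. -/
def ggHat (q : ℕ) (t : ℝ) : ℝ := t^(q-1)

/-- `τ(t) = t(1-t)cot(πt) + t/π`. -/
def tau (t : ℝ) : ℝ := t*(1-t)*(Real.cos (π*t)/Real.sin (π*t)) + t/π

/-- `τ*(t) = t(1-t)`. -/
def tauStar (t : ℝ) : ℝ := t*(1-t)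

/-- `e(t) = e^{2πit}`. -/
def eF (t : ℝ) : ℂ := Complex.exp (2*π*Complex.I*t)

/-- Weight for the `Σ''` summation convention: terms with `n = 0` or `n = h`
carry weight `1/2`. -/
def wD (n h : ℕ) : ℝ := if n = 0 ∨ n = h then 1/2 else 1

/-- `λ(h) = 𝟙_{h ≡ 0 (4)} - 𝟙_{h ≡ 2 (4)}`. -/
def lamD (h : ℕ) : ℝ := (if h % 4 = 0 then (1:ℝ) else 0) - (if h % 4 = 2 then 1 else 0)

/-- `S^𝔤_ψ(x²; (1/d)𝔣) = Σ_{0<n≤x²/√2} 𝔤(n/x²)·ψ((x²/d)·𝔣(n/x²))`. -/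
def SgPsi (q d : ℕ) (x : ℝ) : ℝ :=
  ∑ n ∈ Finset.Icc 1 (Nat.floor (x^2/Real.sqrt 2)),
    gg q ((n:ℝ)/x^2) * sawtooth ((x^2/d) * ff ((n:ℝ)/x^2))

/-- `S^𝔤_{ψ,χ}(x²; (1/(4d))𝔣)`. -/
def SgPsiChi (q d : ℕ) (x : ℝ) : ℝ :=
  ∑ n ∈ Finset.Icc 1 (Nat.floor (x^2/Real.sqrt 2)),
    gg q ((n:ℝ)/x^2) * ∑ a ∈ Finset.range 4,
      chi4 (a:ℤ) * sawtooth ((x^2/(4*d)) * ff ((n:ℝ)/x^2) + (a:ℝ)/4)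

/-- `S^𝔤̂_ψ(x²/d; d𝔣) = Σ_{0<n≤x²/(√2·d)} 𝔤̂(dn/x²)·ψ(x²·𝔣(dn/x²))`. -/
def SghatPsi (q d : ℕ) (x : ℝ) : ℝ :=
  ∑ n ∈ Finset.Icc 1 (Nat.floor (x^2/(Real.sqrt 2 * d))),
    ggHat q (((d*n : ℕ):ℝ)/x^2) * sawtooth (x^2 * ff (((d*n : ℕ):ℝ)/x^2))

/-- `S^{𝔤̂,χ}_ψ(x²/d; d𝔣)`. -/
def SghatPsiChi (q d : ℕ) (x : ℝ) : ℝ :=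
  ∑ n ∈ Finset.Icc 1 (Nat.floor (x^2/(Real.sqrt 2 * d))),
    chi4 (n:ℤ) * ggHat q (((d*n : ℕ):ℝ)/x^2) * sawtooth (x^2 * ff (((d*n : ℕ):ℝ)/x^2))

/-- Pairs `(n,h)` with `n² + h² = m`, `1 ≤ h ≤ H`, `0 ≤ n ≤ h`, `d ∣ n`. -/
def pairsA (H : ℝ) (m d : ℕ) : Finset (ℕ × ℕ) :=
  (Finset.range (m+1) ×ˢ Finset.range (m+1)).filter
    (fun p => p.1^2 + p.2^2 = m ∧ 1 ≤ p.2 ∧ (p.2:ℝ) ≤ H ∧ p.1 ≤ p.2 ∧ d ∣ p.1)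

/-- Pairs `(n,h)` with `n² + h² = m`, `1 ≤ h ≤ H`, `0 ≤ n ≤ h`, `d ∣ h`. -/
def pairsB (H : ℝ) (m d : ℕ) : Finset (ℕ × ℕ) :=
  (Finset.range (m+1) ×ˢ Finset.range (m+1)).filter
    (fun p => p.1^2 + p.2^2 = m ∧ 1 ≤ p.2 ∧ (p.2:ℝ) ≤ H ∧ p.1 ≤ p.2 ∧ d ∣ p.2)

/-- The coefficient `𝔞_H(m,d)`. -/
def aH (q : ℕ) (H : ℝ) (m d : ℕ) : ℝ :=
  (m:ℝ)^(-(3/4:ℝ)) *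
    ((∑ p ∈ pairsA H m d,
        wD p.1 p.2 * tau ((p.2:ℝ)/((⌊H⌋:ℝ)+1)) * gg q ((p.1:ℝ)/Real.sqrt m))
     + ∑ p ∈ pairsB H m d,
        wD p.1 p.2 * tau ((p.2:ℝ)/((d:ℝ)*(⌊H/(d:ℝ)⌋:ℝ)+d)) * ggHat q ((p.1:ℝ)/Real.sqrt m))

/-- The coefficient `𝔞*_H(m,d)`. -/
def aHstar (q : ℕ) (H : ℝ) (m d : ℕ) : ℝ :=
  (m:ℝ)^(-(3/4:ℝ)) *
    ((∑ p ∈ pairsA H m d,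
        wD p.1 p.2 * tauStar ((p.2:ℝ)/((⌊H⌋:ℝ)+1)) * gg q ((p.1:ℝ)/Real.sqrt m))
     + ∑ p ∈ pairsB H m d,
        wD p.1 p.2 * tauStar ((p.2:ℝ)/((d:ℝ)*(⌊H/(d:ℝ)⌋:ℝ)+d)) * ggHat q ((p.1:ℝ)/Real.sqrt m))

/-- The coefficient `𝔞_{H,χ}(m,d)`. -/
def aHchi (q : ℕ) (H : ℝ) (m d : ℕ) : ℝ :=
  2 * (m:ℝ)^(-(3/4:ℝ)) *
    ((∑ p ∈ pairsA H m d,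
        wD p.1 p.2 * chi4 (-(p.2:ℤ)) * tau ((p.2:ℝ)/((⌊H⌋:ℝ)+1)) * gg q ((p.1:ℝ)/Real.sqrt m))
     + ∑ p ∈ pairsB H m d,
        wD p.1 p.2 * chi4 (-(p.1:ℤ)) * tau ((p.2:ℝ)/((d:ℝ)*(⌊H/(d:ℝ)⌋:ℝ)+d)) *
          ggHat q ((p.1:ℝ)/Real.sqrt m))

/-- The coefficient `𝔟*_H(m,d)`. -/
def bHstar (q : ℕ) (H : ℝ) (m d : ℕ) : ℝ :=
  2 * (m:ℝ)^(-(3/4:ℝ)) *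
    ((∑ p ∈ pairsA H m d,
        wD p.1 p.2 * lamD p.2 * tauStar ((p.2:ℝ)/((⌊H⌋:ℝ)+1)) * gg q ((p.1:ℝ)/Real.sqrt m))
     + 2 * ∑ p ∈ (pairsB H m d).filter (fun p => 4 ∣ p.1),
        wD p.1 p.2 * tauStar ((p.2:ℝ)/((d:ℝ)*(⌊H/(d:ℝ)⌋:ℝ)+d)) * ggHat q ((p.1:ℝ)/Real.sqrt m))

/-- The coefficient `𝔡*_H(m,d) = 2^{q-1}𝔞*_H(m,d) + 𝟙_{4∣d}·4^{q-1}·𝔟*_H(m,d)`. -/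
def dHstar (q : ℕ) (H : ℝ) (m d : ℕ) : ℝ :=
  2^(q-1) * aHstar q H m d + (if d % 4 = 0 then (1:ℝ) else 0) * 4^(q-1) * bHstar q H m d

/-- `#{(a,b) ∈ ℤ² : a² + b² = m, a ≠ 0, d ∣ b}`. -/
def countRep (m d : ℕ) : ℝ :=
  Set.ncard {p : ℤ × ℤ | p.1^2 + p.2^2 = (m:ℤ) ∧ p.1 ≠ 0 ∧ (d:ℤ) ∣ p.2}

/-- `ϖ(d)`: the number of positive divisors of `d`. -/
def divCount (d : ℕ) : ℝ := d.divisors.card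

/-- The diagonal sum `Ξ(ν,α)`. -/
def XiD (ν : ℕ → ℝ) (α : ℕ → ℕ → ℝ) : ℝ :=
  ∑' t : ℕ × ℕ × ℕ,
    if 1 ≤ t.1 ∧ 1 ≤ t.2.1 ∧ 1 ≤ t.2.2 ∧ Nat.gcd t.2.1 t.2.2 = 1 then
      |((moebius t.1 : ℤ) : ℝ)| *
        (∑' r : ℕ, if 1 ≤ r then ν (r*t.2.1) * α ((r*t.2.2)^2*t.1) (r*t.2.1) else 0)^2
    else 0

/-- `φ(y) = 1 - y` on `[0,1]`, `0` for `y > 1`. -/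
def phiF (y : ℝ) : ℝ := if y ≤ 1 then 1 - y else 0

end Gath
namespace Gath

/-! ### Auxiliary lemmas for statement17 -/

def repFinset (m d : ℕ) : Finset (ℤ × ℤ) :=
  ((Finset.Icc (-(m:ℤ)) (m:ℤ)) ×ˢ (Finset.Icc (-(m:ℤ)) (m:ℤ))).filter
    (fun p => p.1^2 + p.2^2 = (m:ℤ) ∧ p.1 ≠ 0 ∧ (d:ℤ) ∣ p.2)

lemma countRep_eq (m d : ℕ) : countRep m d = (repFinset m d).card := by
  have hset : {p : ℤ × ℤ | p.1^2 + p.2^2 = (m:ℤ) ∧ p.1 ≠ 0 ∧ (d:ℤ) ∣ p.2}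
      = ↑(repFinset m d) := by
    ext p
    simp only [repFinset, Finset.coe_filter, Finset.mem_product, Finset.mem_Icc,
      Set.mem_setOf_eq]
    constructor
    · rintro ⟨h1, h2, h3⟩
      have ha1 := Int.le_self_sq p.1
      have ha2 := Int.le_self_sq (-p.1)
      have hb1 := Int.le_self_sq p.2
      have hb2 := Int.le_self_sq (-p.2)
      have s1 := sq_nonneg p.1
      have s2 := sq_nonneg p.2
      refine ⟨⟨⟨?_, ?_⟩, ?_, ?_⟩, h1, h2, h3⟩ <;> nlinarith
    · tauto
  rw [countRep, hset, Set.ncard_coe_finset]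

lemma mem_pairsA {H : ℝ} {M D : ℕ} {p : ℕ × ℕ} :
    p ∈ pairsA H M D ↔ p.1^2 + p.2^2 = M ∧ 1 ≤ p.2 ∧ (p.2:ℝ) ≤ H ∧ p.1 ≤ p.2 ∧ D ∣ p.1 := by
  simp only [pairsA, Finset.mem_filter, Finset.mem_product, Finset.mem_range]
  constructor
  · tauto
  · rintro ⟨h1, h2, h3, h4, h5⟩
    have e1 := Nat.le_self_pow two_ne_zero p.1
    have e2 := Nat.le_self_pow two_ne_zero p.2
    exact ⟨⟨by omega, by omega⟩, h1, h2, h3, h4, h5⟩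

lemma mem_pairsB {H : ℝ} {M D : ℕ} {p : ℕ × ℕ} :
    p ∈ pairsB H M D ↔ p.1^2 + p.2^2 = M ∧ 1 ≤ p.2 ∧ (p.2:ℝ) ≤ H ∧ p.1 ≤ p.2 ∧ D ∣ p.2 := by
  simp only [pairsB, Finset.mem_filter, Finset.mem_product, Finset.mem_range]
  constructor
  · tauto
  · rintro ⟨h1, h2, h3, h4, h5⟩
    have e1 := Nat.le_self_pow two_ne_zero p.1
    have e2 := Nat.le_self_pow two_ne_zero p.2
    exact ⟨⟨by omega, by omega⟩, h1, h2, h3, h4, h5⟩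

lemma mem_repFinset {m d : ℕ} {z : ℤ × ℤ} :
    z ∈ repFinset m d ↔ z.1^2 + z.2^2 = (m:ℤ) ∧ z.1 ≠ 0 ∧ (d:ℤ) ∣ z.2 := by
  simp only [repFinset, Finset.mem_filter, Finset.mem_product, Finset.mem_Icc]
  constructor
  · tauto
  · rintro ⟨h1, h2, h3⟩
    have ha1 := Int.le_self_sq z.1
    have ha2 := Int.le_self_sq (-z.1)
    have hb1 := Int.le_self_sq z.2
    have hb2 := Int.le_self_sq (-z.2)
    have s1 := sq_nonneg z.1
    have s2 := sq_nonneg z.2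
    exact ⟨⟨⟨by nlinarith, by nlinarith⟩, by nlinarith, by nlinarith⟩, h1, h2, h3⟩

lemma pairsA_dvd {H : ℝ} {r d m : ℕ} {p : ℕ × ℕ}
    (hp : p ∈ pairsA H (r^2*m) (r*d)) : r ∣ p.1 ∧ r ∣ p.2 := by
  rw [mem_pairsA] at hp
  obtain ⟨h1, _h2, _h3, _h4, h5⟩ := hp
  have hrn : r ∣ p.1 := (dvd_mul_right r d).trans h5
  have h6 : r^2 ∣ p.1^2 := pow_dvd_pow_of_dvd hrn 2
  have h7 : p.2^2 = r^2*m - p.1^2 := by omega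
  have hr2 : r^2 ∣ p.2^2 := by
    rw [h7]; exact Nat.dvd_sub (Dvd.intro m rfl) h6
  exact ⟨hrn, (Nat.pow_dvd_pow_iff two_ne_zero).mp hr2⟩

lemma pairsB_dvd {H : ℝ} {r d m : ℕ} {p : ℕ × ℕ}
    (hp : p ∈ pairsB H (r^2*m) (r*d)) : r ∣ p.1 ∧ r ∣ p.2 := by
  rw [mem_pairsB] at hp
  obtain ⟨h1, _h2, _h3, _h4, h5⟩ := hp
  have hrh : r ∣ p.2 := (dvd_mul_right r d).trans h5
  have h6 : r^2 ∣ p.2^2 := pow_dvd_pow_of_dvd hrh 2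
  have h7 : p.1^2 = r^2*m - p.2^2 := by omega
  have hr2 : r^2 ∣ p.1^2 := by
    rw [h7]; exact Nat.dvd_sub (Dvd.intro m rfl) h6
  exact ⟨(Nat.pow_dvd_pow_iff two_ne_zero).mp hr2, hrh⟩

lemma pairsA_card_le (H : ℝ) (r d m : ℕ) (hr : 1 ≤ r) :
    (pairsA H (r^2*m) (r*d)).card ≤ (repFinset m d).card := by
  have hr0 : 0 < r := hr
  apply Finset.card_le_card_of_injOn (fun p => (((p.2/r : ℕ) : ℤ), ((p.1/r : ℕ) : ℤ)))
  · intro p hp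
    obtain ⟨hdn, hdh⟩ := pairsA_dvd hp
    rw [Finset.mem_coe, mem_pairsA] at hp
    obtain ⟨h1, h2, h3, h4, h5⟩ := hp
    obtain ⟨b, hb⟩ := hdn
    obtain ⟨a, ha⟩ := hdh
    have hbv : p.1 / r = b := by rw [hb, Nat.mul_div_cancel_left _ hr0]
    have hav : p.2 / r = a := by rw [ha, Nat.mul_div_cancel_left _ hr0]
    have hm : a^2 + b^2 = m := by
      have : r^2*(a^2+b^2) = r^2*m := by rw [← h1, ha, hb]; ring
      exact Nat.eq_of_mul_eq_mul_left (by positivity) this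
    rw [Finset.mem_coe, mem_repFinset]
    refine ⟨?_, ?_, ?_⟩
    · simp only [hav, hbv]; push_cast [← hm]; ring
    · simp only [hav]
      have : a ≠ 0 := by rintro rfl; rw [mul_zero] at ha; omega
      exact_mod_cast this
    · simp only [hbv]
      have : d ∣ b := by
        obtain ⟨k, hk⟩ := h5
        have : r * b = r * (d * k) := by rw [← hb, hk]; ring
        exact ⟨k, Nat.eq_of_mul_eq_mul_left hr0 this⟩
      exact_mod_cast this
  · intro p hp p' hp' heq
    obtain ⟨hdn, hdh⟩ := pairsA_dvd hp
    obtain ⟨hdn', hdh'⟩ := pairsA_dvd hp'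
    simp only [Prod.mk.injEq, Nat.cast_inj] at heq
    have e1 : p.1 = p'.1 := by
      rw [← Nat.div_mul_cancel hdn, ← Nat.div_mul_cancel hdn', heq.2]
    have e2 : p.2 = p'.2 := by
      rw [← Nat.div_mul_cancel hdh, ← Nat.div_mul_cancel hdh', heq.1]
    exact Prod.ext e1 e2

lemma pairsB_card_le (H : ℝ) (r d m : ℕ) (hr : 1 ≤ r) :
    (pairsB H (r^2*m) (r*d)).card ≤ (repFinset m d).card := by
  have hr0 : 0 < r := hr
  apply Finset.card_le_card_of_injOn
    (fun p => if p.1 = 0 then (((p.2/r : ℕ) : ℤ), 0) else (((p.1/r : ℕ) : ℤ), ((p.2/r : ℕ) : ℤ)))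
  · intro p hp
    obtain ⟨hdn, hdh⟩ := pairsB_dvd hp
    rw [Finset.mem_coe, mem_pairsB] at hp
    obtain ⟨h1, h2, h3, h4, h5⟩ := hp
    obtain ⟨b, hb⟩ := hdn
    obtain ⟨a, ha⟩ := hdh
    have hbv : p.1 / r = b := by rw [hb, Nat.mul_div_cancel_left _ hr0]
    have hav : p.2 / r = a := by rw [ha, Nat.mul_div_cancel_left _ hr0]
    have hm : b^2 + a^2 = m := by
      have : r^2*(b^2+a^2) = r^2*m := by rw [← h1, ha, hb]; ring
      exact Nat.eq_of_mul_eq_mul_left (by positivity) this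
    have hda : d ∣ a := by
      obtain ⟨k, hk⟩ := h5
      have : r * a = r * (d * k) := by rw [← ha, hk]; ring
      exact ⟨k, Nat.eq_of_mul_eq_mul_left hr0 this⟩
    have ha0 : a ≠ 0 := by rintro rfl; rw [mul_zero] at ha; omega
    by_cases hz : p.1 = 0
    · beta_reduce; rw [if_pos hz, Finset.mem_coe, mem_repFinset]
      refine ⟨?_, ?_, dvd_zero _⟩
      · simp only [hav]
        have hrb : r * b = 0 := by rw [← hb, hz]
        have hb0 : b = 0 := by
          rcases Nat.mul_eq_zero.mp hrb with h | h
          · omega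
          · exact h
        push_cast [← hm, hb0]; ring
      · simpa [hav] using ha0
    · beta_reduce; rw [if_neg hz, Finset.mem_coe, mem_repFinset]
      refine ⟨?_, ?_, ?_⟩
      · simp only [hav, hbv]; push_cast [← hm]; ring
      · simp only [hbv]
        have : b ≠ 0 := by rintro rfl; rw [mul_zero] at hb; omega
        exact_mod_cast this
      · simp only [hav]; exact_mod_cast hda
  · intro p hp p' hp' heq
    obtain ⟨hdn, hdh⟩ := pairsB_dvd hp
    obtain ⟨hdn', hdh'⟩ := pairsB_dvd hp'
    have hq2 : 1 ≤ p.2 := (mem_pairsB.mp hp).2.1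
    have hq2' : 1 ≤ p'.2 := (mem_pairsB.mp hp').2.1
    have hh1 : 1 ≤ p.2 / r := Nat.one_le_div_iff hr0 |>.mpr (Nat.le_of_dvd (by omega) hdh)
    have hh1' : 1 ≤ p'.2 / r := Nat.one_le_div_iff hr0 |>.mpr (Nat.le_of_dvd (by omega) hdh')
    by_cases hz : p.1 = 0 <;> by_cases hz' : p'.1 = 0 <;>
      simp only [hz, hz', if_pos, if_neg, if_true, if_false, Prod.mk.injEq, Nat.cast_inj] at heq
    · have e2 : p.2 = p'.2 := by
        rw [← Nat.div_mul_cancel hdh, ← Nat.div_mul_cancel hdh', heq.1]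
      exact Prod.ext (by rw [hz, hz']) e2
    · exfalso
      have h0 : p'.2 / r = 0 := by exact_mod_cast heq.2.symm
      omega
    · exfalso
      have h0 : p.2 / r = 0 := by exact_mod_cast heq.2
      omega
    · have e1 : p.1 = p'.1 := by
        rw [← Nat.div_mul_cancel hdn, ← Nat.div_mul_cancel hdn', heq.1]
      have e2 : p.2 = p'.2 := by
        rw [← Nat.div_mul_cancel hdh, ← Nat.div_mul_cancel hdh', heq.2]
      exact Prod.ext e1 e2

lemma wD_abs (n h : ℕ) : |wD n h| ≤ 1 := by
  unfold wD; split <;> rw [abs_of_nonneg (by norm_num)] <;> norm_num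

lemma lamD_abs (h : ℕ) : |lamD h| ≤ 1 := by
  unfold lamD; split <;> split <;> norm_num

lemma gg_abs {q : ℕ} (hq : 1 ≤ q) {u : ℝ} (h0 : 0 ≤ u) (h1 : u ≤ 1) : |gg q u| ≤ 1 := by
  unfold gg
  have hu : 0 ≤ 1 - u^2 := by nlinarith
  have hu1 : 1 - u^2 ≤ 1 := by nlinarith
  have he : (0:ℝ) ≤ ((q:ℝ)-1)/2 := by
    have : (1:ℝ) ≤ q := by exact_mod_cast hq
    linarith
  rw [abs_of_nonneg (Real.rpow_nonneg hu _)]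
  exact Real.rpow_le_one hu hu1 he

lemma ggHat_abs {q : ℕ} {u : ℝ} (h0 : 0 ≤ u) (h1 : u ≤ 1) : |ggHat q u| ≤ 1 := by
  unfold ggHat
  rw [abs_of_nonneg (pow_nonneg h0 _)]
  exact pow_le_one₀ h0 h1

lemma tauStar_abs {t : ℝ} (h0 : 0 ≤ t) (h1 : t ≤ 1) : |tauStar t| ≤ t := by
  unfold tauStar
  rw [abs_of_nonneg (by nlinarith)]
  nlinarith

lemma tauStar_A {H M : ℝ} (hH : 1 ≤ H) {h : ℝ} (h0 : 0 ≤ h) (hhH : h ≤ H)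
    (hhM : h ≤ Real.sqrt M) : |tauStar (h/((⌊H⌋:ℝ)+1))| ≤ Real.sqrt M / H := by
  have hF : H < (⌊H⌋:ℝ)+1 := Int.lt_floor_add_one H
  have hH0 : (0:ℝ) < H := by linarith
  have hF0 : (0:ℝ) < (⌊H⌋:ℝ)+1 := by linarith
  have ht0 : 0 ≤ h/((⌊H⌋:ℝ)+1) := by positivity
  have ht1 : h/((⌊H⌋:ℝ)+1) ≤ 1 := by
    rw [div_le_one hF0]; linarith
  calc |tauStar (h/((⌊H⌋:ℝ)+1))| ≤ h/((⌊H⌋:ℝ)+1) := tauStar_abs ht0 ht1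
    _ ≤ Real.sqrt M / H := div_le_div₀ (Real.sqrt_nonneg M) hhM hH0 (by linarith)

lemma tauStar_B {H M : ℝ} (hH : 1 ≤ H) {D : ℕ} (hD : 1 ≤ D) {h : ℝ} (h0 : 0 ≤ h) (hhH : h ≤ H)
    (hhM : h ≤ Real.sqrt M) :
    |tauStar (h/((D:ℝ)*(⌊H/(D:ℝ)⌋:ℝ)+D))| ≤ Real.sqrt M / H := by
  have hD0 : (0:ℝ) < D := by exact_mod_cast hD
  have hH0 : (0:ℝ) < H := by linarith
  have hfl : H/(D:ℝ) < (⌊H/(D:ℝ)⌋:ℝ)+1 := Int.lt_floor_add_one _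
  have hF : H < (D:ℝ)*(⌊H/(D:ℝ)⌋:ℝ)+D := by
    have := (div_lt_iff₀ hD0).mp hfl
    nlinarith
  have hF0 : (0:ℝ) < (D:ℝ)*(⌊H/(D:ℝ)⌋:ℝ)+D := by linarith
  have ht0 : 0 ≤ h/((D:ℝ)*(⌊H/(D:ℝ)⌋:ℝ)+D) := by positivity
  have ht1 : h/((D:ℝ)*(⌊H/(D:ℝ)⌋:ℝ)+D) ≤ 1 := by
    rw [div_le_one hF0]; linarith
  calc |tauStar (h/((D:ℝ)*(⌊H/(D:ℝ)⌋:ℝ)+D))| ≤ h/((D:ℝ)*(⌊H/(D:ℝ)⌋:ℝ)+D) := tauStar_abs ht0 ht1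
    _ ≤ Real.sqrt M / H := div_le_div₀ (Real.sqrt_nonneg M) hhM hH0 (by linarith)

lemma sum_abs_le_card_mul {s : Finset (ℕ×ℕ)} {f : ℕ×ℕ → ℝ} {B : ℝ}
    (h : ∀ p ∈ s, |f p| ≤ B) : |∑ p ∈ s, f p| ≤ s.card * B := by
  calc |∑ p ∈ s, f p| ≤ ∑ p ∈ s, |f p| := Finset.abs_sum_le_sum_abs _ _
    _ ≤ s.card • B := Finset.sum_le_card_nsmul s _ B h
    _ = s.card * B := by simp [nsmul_eq_mul]

lemma bounds_aux {M : ℕ} (hM : 1 ≤ M) {n h : ℕ} (h1 : n^2+h^2 = M) (h4 : n ≤ h) :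
    (h:ℝ) ≤ Real.sqrt M ∧ 0 ≤ (n:ℝ)/Real.sqrt M ∧ (n:ℝ)/Real.sqrt M ≤ 1 := by
  have hM0 : (0:ℝ) < M := by exact_mod_cast hM
  have hs0 : 0 < Real.sqrt M := Real.sqrt_pos.mpr hM0
  have hh2 : ((h:ℝ))^2 ≤ (M:ℝ) := by
    have : h^2 ≤ M := by omega
    exact_mod_cast this
  have hn2 : ((n:ℝ))^2 ≤ (M:ℝ) := by
    have : n^2 ≤ M := by omega
    exact_mod_cast this
  have hhM : (h:ℝ) ≤ Real.sqrt M := by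
    calc (h:ℝ) = Real.sqrt ((h:ℝ)^2) := (Real.sqrt_sq (by positivity)).symm
      _ ≤ Real.sqrt M := Real.sqrt_le_sqrt hh2
  have hnM : (n:ℝ) ≤ Real.sqrt M := by
    calc (n:ℝ) = Real.sqrt ((n:ℝ)^2) := (Real.sqrt_sq (by positivity)).symm
      _ ≤ Real.sqrt M := Real.sqrt_le_sqrt hn2
  exact ⟨hhM, by positivity, (div_le_one hs0).mpr hnM⟩

lemma termA_le {q : ℕ} (hq : 3 ≤ q) {H : ℝ} (hH : 1 ≤ H) {M D : ℕ} (hM : 1 ≤ M)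
    {p : ℕ×ℕ} (hp : p ∈ pairsA H M D) :
    |wD p.1 p.2 * tauStar ((p.2:ℝ)/((⌊H⌋:ℝ)+1)) * gg q ((p.1:ℝ)/Real.sqrt M)|
      ≤ Real.sqrt M / H := by
  rw [mem_pairsA] at hp
  obtain ⟨h1, h2, h3, h4, _⟩ := hp
  obtain ⟨hhM, hu0, hu1⟩ := bounds_aux hM h1 h4
  have b1 := wD_abs p.1 p.2
  have b2 := tauStar_A (M := (M:ℝ)) hH (by positivity) h3 hhM
  have b3 := gg_abs (q := q) (by omega) hu0 hu1
  calc |wD p.1 p.2 * tauStar ((p.2:ℝ)/((⌊H⌋:ℝ)+1)) * gg q ((p.1:ℝ)/Real.sqrt M)|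
      = |wD p.1 p.2| * |tauStar ((p.2:ℝ)/((⌊H⌋:ℝ)+1))| * |gg q ((p.1:ℝ)/Real.sqrt M)| := by
        rw [abs_mul, abs_mul]
    _ ≤ 1 * (Real.sqrt M / H) * 1 := by
        apply mul_le_mul _ b3 (abs_nonneg _) (by positivity)
        exact mul_le_mul b1 b2 (abs_nonneg _) (by norm_num)
    _ = Real.sqrt M / H := by ring

lemma termAlam_le {q : ℕ} (hq : 3 ≤ q) {H : ℝ} (hH : 1 ≤ H) {M D : ℕ} (hM : 1 ≤ M)
    {p : ℕ×ℕ} (hp : p ∈ pairsA H M D) :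
    |wD p.1 p.2 * lamD p.2 * tauStar ((p.2:ℝ)/((⌊H⌋:ℝ)+1)) * gg q ((p.1:ℝ)/Real.sqrt M)|
      ≤ Real.sqrt M / H := by
  have key := termA_le hq hH hM hp
  have blam := lamD_abs p.2
  calc |wD p.1 p.2 * lamD p.2 * tauStar ((p.2:ℝ)/((⌊H⌋:ℝ)+1)) * gg q ((p.1:ℝ)/Real.sqrt M)|
      = |lamD p.2| * |wD p.1 p.2 * tauStar ((p.2:ℝ)/((⌊H⌋:ℝ)+1)) * gg q ((p.1:ℝ)/Real.sqrt M)| := by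
        rw [← abs_mul]; ring_nf
    _ ≤ 1 * (Real.sqrt M / H) := mul_le_mul blam key (abs_nonneg _) (by norm_num)
    _ = Real.sqrt M / H := by ring

lemma termB_le {q : ℕ} (hq : 3 ≤ q) {H : ℝ} (hH : 1 ≤ H) {M D : ℕ} (hM : 1 ≤ M) (hD : 1 ≤ D)
    {p : ℕ×ℕ} (hp : p ∈ pairsB H M D) :
    |wD p.1 p.2 * tauStar ((p.2:ℝ)/((D:ℝ)*(⌊H/(D:ℝ)⌋:ℝ)+D)) * ggHat q ((p.1:ℝ)/Real.sqrt M)|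
      ≤ Real.sqrt M / H := by
  rw [mem_pairsB] at hp
  obtain ⟨h1, h2, h3, h4, _⟩ := hp
  obtain ⟨hhM, hu0, hu1⟩ := bounds_aux hM h1 h4
  have b1 := wD_abs p.1 p.2
  have b2 := tauStar_B (M := (M:ℝ)) hH hD (by positivity) h3 hhM
  have b3 := ggHat_abs (q := q) hu0 hu1
  calc |wD p.1 p.2 * tauStar ((p.2:ℝ)/((D:ℝ)*(⌊H/(D:ℝ)⌋:ℝ)+D)) * ggHat q ((p.1:ℝ)/Real.sqrt M)|
      = |wD p.1 p.2| * |tauStar ((p.2:ℝ)/((D:ℝ)*(⌊H/(D:ℝ)⌋:ℝ)+D))| * |ggHat q ((p.1:ℝ)/Real.sqrt M)| := by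
        rw [abs_mul, abs_mul]
    _ ≤ 1 * (Real.sqrt M / H) * 1 := by
        apply mul_le_mul _ b3 (abs_nonneg _) (by positivity)
        exact mul_le_mul b1 b2 (abs_nonneg _) (by norm_num)
    _ = Real.sqrt M / H := by ring

lemma core_eq {r m : ℕ} (hr : 1 ≤ r) (hm : 1 ≤ m) :
    ((r^2*m:ℕ):ℝ)^(-(3/4:ℝ)) * Real.sqrt ((r^2*m:ℕ):ℝ)
      = Real.sqrt m / ((r:ℝ)^((1:ℝ)/2) * (m:ℝ)^((3:ℝ)/4)) := by
  have hx : (0:ℝ) < r := by exact_mod_cast hr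
  have hy : (0:ℝ) < m := by exact_mod_cast hm
  have hcast : ((r^2*m:ℕ):ℝ) = (r:ℝ)^2 * m := by push_cast; ring
  have e1 : (-(3/4:ℝ)) + 1/2 = -(1/4:ℝ) := by norm_num
  rw [hcast, Real.sqrt_eq_rpow, ← Real.rpow_add (by positivity), e1,
      Real.mul_rpow (by positivity) hy.le,
      ← Real.rpow_natCast (r:ℝ) 2, ← Real.rpow_mul hx.le]
  rw [Real.sqrt_eq_rpow, eq_div_iff (by positivity)]
  rw [show ((2:ℕ):ℝ) * -(1/4:ℝ) = -(1/2:ℝ) by norm_num]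
  have e2 : (r:ℝ)^(-(1/2:ℝ)) * (m:ℝ)^(-(1/4:ℝ)) * ((r:ℝ)^((1:ℝ)/2) * (m:ℝ)^((3:ℝ)/4))
      = ((r:ℝ)^(-(1/2:ℝ)) * (r:ℝ)^((1:ℝ)/2)) * ((m:ℝ)^(-(1/4:ℝ)) * (m:ℝ)^((3:ℝ)/4)) := by ring
  rw [e2, ← Real.rpow_add hx, ← Real.rpow_add hy]
  norm_num

/-- Lemma 4.4. -/
theorem statement17 (q : ℕ) (hq : 3 ≤ q) :
    ∃ C : ℝ, 0 < C ∧ ∀ H : ℝ, 1 ≤ H → ∀ r d m : ℕ, 1 ≤ r → 1 ≤ d → 1 ≤ m →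
      ((r*d : ℕ):ℝ) ≤ H → ∀ Y : ℝ, (m:ℝ) ≤ Y →
      |aHstar q H (r^2*m) (r*d)| ≤
        C * (Real.sqrt Y / ((r:ℝ)^((1:ℝ)/2) * (m:ℝ)^((3:ℝ)/4) * H)) * countRep m d *
          (if ((r^2*m : ℕ):ℝ) ≤ 2*H^2 then 1 else 0)
      ∧ |dHstar q H (r^2*m) (r*d)| ≤
        C * (Real.sqrt Y / ((r:ℝ)^((1:ℝ)/2) * (m:ℝ)^((3:ℝ)/4) * H)) * countRep m d *
          (if ((r^2*m : ℕ):ℝ) ≤ 2*H^2 then 1 else 0) := by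
  refine ⟨(2:ℝ)^q + 6*4^(q-1), by positivity, ?_⟩
  intro H hH r d m hr hd hm hrd Y hY
  have hH0 : (0:ℝ) < H := lt_of_lt_of_le one_pos hH
  have hy : (0:ℝ) < m := by exact_mod_cast hm
  have hx : (0:ℝ) < r := by exact_mod_cast hr
  have hM1 : 1 ≤ r^2*m := by
    have : 0 < r^2*m := Nat.mul_pos (Nat.pow_pos hr) hm
    omega
  have hD1 : 1 ≤ r*d := Nat.one_le_iff_ne_zero.mpr (by positivity)
  by_cases hind : ((r^2*m : ℕ):ℝ) ≤ 2*H^2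
  case neg =>
    have hA : pairsA H (r^2*m) (r*d) = ∅ := by
      rw [Finset.eq_empty_iff_forall_notMem]
      intro p hp
      rw [mem_pairsA] at hp
      obtain ⟨h1, h2, h3, h4, _⟩ := hp
      apply hind
      have hsq : p.1^2 ≤ p.2^2 := Nat.pow_le_pow_left h4 2
      have hnat : (r^2*m : ℕ) ≤ 2 * p.2^2 := by omega
      have hc : ((r^2*m:ℕ):ℝ) ≤ 2*(p.2:ℝ)^2 := by exact_mod_cast hnat
      have h0 : (0:ℝ) ≤ (p.2:ℝ) := by positivity
      nlinarith
    have hB : pairsB H (r^2*m) (r*d) = ∅ := by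
      rw [Finset.eq_empty_iff_forall_notMem]
      intro p hp
      rw [mem_pairsB] at hp
      obtain ⟨h1, h2, h3, h4, _⟩ := hp
      apply hind
      have hsq : p.1^2 ≤ p.2^2 := Nat.pow_le_pow_left h4 2
      have hnat : (r^2*m : ℕ) ≤ 2 * p.2^2 := by omega
      have hc : ((r^2*m:ℕ):ℝ) ≤ 2*(p.2:ℝ)^2 := by exact_mod_cast hnat
      have h0 : (0:ℝ) ≤ (p.2:ℝ) := by positivity
      nlinarith
    rw [if_neg hind]
    constructor <;> simp [aHstar, dHstar, bHstar, hA, hB]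
  case pos =>
    rw [if_pos hind]
    have hK := countRep_eq m d
    set K := ((repFinset m d).card : ℝ) with hKdef
    have hK0 : (0:ℝ) ≤ K := by positivity
    have cardA : ((pairsA H (r^2*m) (r*d)).card : ℝ) ≤ K :=
      Nat.cast_le.mpr (pairsA_card_le H r d m hr)
    have cardB : ((pairsB H (r^2*m) (r*d)).card : ℝ) ≤ K :=
      Nat.cast_le.mpr (pairsB_card_le H r d m hr)
    have cardBf : (((pairsB H (r^2*m) (r*d)).filter (fun p => 4 ∣ p.1)).card : ℝ) ≤ K :=
      le_trans (Nat.cast_le.mpr (Finset.card_filter_le _ _)) cardB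
    set B : ℝ := Real.sqrt ((r^2*m:ℕ):ℝ) / H with hBdef
    have hB0 : (0:ℝ) ≤ B := by positivity
    have sumA : |∑ p ∈ pairsA H (r^2*m) (r*d),
        wD p.1 p.2 * tauStar ((p.2:ℝ)/((⌊H⌋:ℝ)+1)) * gg q ((p.1:ℝ)/Real.sqrt ((r^2*m:ℕ):ℝ))|
        ≤ K * B := by
      calc _ ≤ ((pairsA H (r^2*m) (r*d)).card : ℝ) * B :=
            sum_abs_le_card_mul (fun p hp => termA_le hq hH hM1 hp)
        _ ≤ K * B := mul_le_mul_of_nonneg_right cardA hB0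
    have sumB : |∑ p ∈ pairsB H (r^2*m) (r*d),
        wD p.1 p.2 * tauStar ((p.2:ℝ)/(((r*d:ℕ):ℝ)*(⌊H/((r*d:ℕ):ℝ)⌋:ℝ)+((r*d:ℕ):ℝ)))
          * ggHat q ((p.1:ℝ)/Real.sqrt ((r^2*m:ℕ):ℝ))| ≤ K * B := by
      calc _ ≤ ((pairsB H (r^2*m) (r*d)).card : ℝ) * B :=
            sum_abs_le_card_mul (fun p hp => termB_le hq hH hM1 hD1 hp)
        _ ≤ K * B := mul_le_mul_of_nonneg_right cardB hB0
    have sumAl : |∑ p ∈ pairsA H (r^2*m) (r*d),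
        wD p.1 p.2 * lamD p.2 * tauStar ((p.2:ℝ)/((⌊H⌋:ℝ)+1)) * gg q ((p.1:ℝ)/Real.sqrt ((r^2*m:ℕ):ℝ))|
        ≤ K * B := by
      calc _ ≤ ((pairsA H (r^2*m) (r*d)).card : ℝ) * B :=
            sum_abs_le_card_mul (fun p hp => termAlam_le hq hH hM1 hp)
        _ ≤ K * B := mul_le_mul_of_nonneg_right cardA hB0
    have sumBf : |∑ p ∈ (pairsB H (r^2*m) (r*d)).filter (fun p => 4 ∣ p.1),
        wD p.1 p.2 * tauStar ((p.2:ℝ)/(((r*d:ℕ):ℝ)*(⌊H/((r*d:ℕ):ℝ)⌋:ℝ)+((r*d:ℕ):ℝ)))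
          * ggHat q ((p.1:ℝ)/Real.sqrt ((r^2*m:ℕ):ℝ))| ≤ K * B := by
      calc _ ≤ (((pairsB H (r^2*m) (r*d)).filter (fun p => 4 ∣ p.1)).card : ℝ) * B :=
            sum_abs_le_card_mul (fun p hp => termB_le hq hH hM1 hD1 (Finset.mem_of_mem_filter p hp))
        _ ≤ K * B := mul_le_mul_of_nonneg_right cardBf hB0
    have hc0 : (0:ℝ) ≤ ((r^2*m:ℕ):ℝ)^(-(3/4:ℝ)) := by positivity
    have haH : |aHstar q H (r^2*m) (r*d)| ≤ 2 * K * (B * ((r^2*m:ℕ):ℝ)^(-(3/4:ℝ))) := by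
      rw [aHstar, abs_mul, abs_of_nonneg hc0]
      calc ((r^2*m:ℕ):ℝ)^(-(3/4:ℝ)) * |_ + _|
          ≤ ((r^2*m:ℕ):ℝ)^(-(3/4:ℝ)) * (K*B + K*B) := by
            apply mul_le_mul_of_nonneg_left _ hc0
            exact (abs_add_le _ _).trans (add_le_add sumA sumB)
        _ = 2 * K * (B * ((r^2*m:ℕ):ℝ)^(-(3/4:ℝ))) := by ring
    have hbH : |bHstar q H (r^2*m) (r*d)| ≤ 6 * K * (B * ((r^2*m:ℕ):ℝ)^(-(3/4:ℝ))) := by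
      rw [bHstar, mul_assoc, abs_mul, abs_mul, abs_of_nonneg hc0]
      rw [show |(2:ℝ)| = 2 by norm_num]
      calc 2 * (((r^2*m:ℕ):ℝ)^(-(3/4:ℝ)) * |_ + 2 * _|)
          ≤ 2 * (((r^2*m:ℕ):ℝ)^(-(3/4:ℝ)) * (K*B + 2*(K*B))) := by
            apply mul_le_mul_of_nonneg_left _ (by norm_num)
            apply mul_le_mul_of_nonneg_left _ hc0
            refine (abs_add_le _ _).trans (add_le_add sumAl ?_)
            rw [abs_mul, show |(2:ℝ)| = 2 by norm_num]
            exact mul_le_mul_of_nonneg_left sumBf (by norm_num)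
        _ = 6 * K * (B * ((r^2*m:ℕ):ℝ)^(-(3/4:ℝ))) := by ring
    set X : ℝ := Real.sqrt Y / ((r:ℝ)^((1:ℝ)/2) * (m:ℝ)^((3:ℝ)/4) * H) with hXdef
    have hX0 : (0:ℝ) ≤ X := by positivity
    have base : B * ((r^2*m:ℕ):ℝ)^(-(3/4:ℝ)) ≤ X := by
      have e : B * ((r^2*m:ℕ):ℝ)^(-(3/4:ℝ))
          = Real.sqrt m / ((r:ℝ)^((1:ℝ)/2)*(m:ℝ)^((3:ℝ)/4)*H) := by
        rw [hBdef, div_mul_eq_mul_div, mul_comm, core_eq hr hm, div_div]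
      rw [e, hXdef]
      gcongr
    have hBM0 : (0:ℝ) ≤ B * ((r^2*m:ℕ):ℝ)^(-(3/4:ℝ)) := mul_nonneg hB0 hc0
    have h2q : (2:ℝ) ≤ 2^q := by
      calc (2:ℝ) = 2^1 := by norm_num
        _ ≤ 2^q := pow_le_pow_right₀ (by norm_num) (by omega)
    have h4q : (0:ℝ) ≤ 6*4^(q-1) := by positivity
    have ha_final : |aHstar q H (r^2*m) (r*d)| ≤ ((2:ℝ)^q + 6*4^(q-1)) * X * K * 1 := by
      have t2 : 2 * K * (B * ((r^2*m:ℕ):ℝ)^(-(3/4:ℝ))) ≤ 2 * K * X := by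
        exact mul_le_mul_of_nonneg_left base (by positivity)
      have t3 : 2 * K * X ≤ ((2:ℝ)^q + 6*4^(q-1)) * X * K * 1 := by
        have hXK : (0:ℝ) ≤ X * K := mul_nonneg hX0 hK0
        have hc : (2:ℝ) ≤ 2^q + 6*4^(q-1) := by linarith
        calc 2*K*X = 2*(X*K) := by ring
          _ ≤ ((2:ℝ)^q+6*4^(q-1))*(X*K) := mul_le_mul_of_nonneg_right hc hXK
          _ = ((2:ℝ)^q + 6*4^(q-1)) * X * K * 1 := by ring
      linarith
    refine ⟨by rw [hK]; exact ha_final, ?_⟩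
    have hd_final : |dHstar q H (r^2*m) (r*d)| ≤ ((2:ℝ)^q + 6*4^(q-1)) * X * K * 1 := by
      rw [dHstar]
      have step1 : |(2:ℝ)^(q-1) * aHstar q H (r^2*m) (r*d)
            + (if (r*d) % 4 = 0 then (1:ℝ) else 0) * 4^(q-1) * bHstar q H (r^2*m) (r*d)|
          ≤ (2:ℝ)^(q-1) * |aHstar q H (r^2*m) (r*d)| + 4^(q-1) * |bHstar q H (r^2*m) (r*d)| := by
        refine (abs_add_le _ _).trans (add_le_add ?_ ?_)
        · rw [abs_mul, abs_of_nonneg (by positivity : (0:ℝ) ≤ (2:ℝ)^(q-1))]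
        · rw [abs_mul, abs_mul]
          have hi : |(if (r*d) % 4 = 0 then (1:ℝ) else 0)| ≤ 1 := by split <;> norm_num
          have h4 : (0:ℝ) ≤ (4:ℝ)^(q-1) := by positivity
          have hkey : |(if (r*d) % 4 = 0 then (1:ℝ) else 0)| * |(4:ℝ)^(q-1)| ≤ 4^(q-1) := by
            rw [abs_of_nonneg h4]
            calc |(if (r*d) % 4 = 0 then (1:ℝ) else 0)| * (4:ℝ)^(q-1)
                ≤ 1 * (4:ℝ)^(q-1) := mul_le_mul_of_nonneg_right hi h4
              _ = (4:ℝ)^(q-1) := one_mul _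
          exact mul_le_mul_of_nonneg_right hkey (abs_nonneg _)
      have step2 : (2:ℝ)^(q-1) * |aHstar q H (r^2*m) (r*d)| + 4^(q-1) * |bHstar q H (r^2*m) (r*d)|
          ≤ (2:ℝ)^(q-1) * (2 * K * X) + 4^(q-1) * (6 * K * X) := by
        have ta : |aHstar q H (r^2*m) (r*d)| ≤ 2 * K * X :=
          haH.trans (mul_le_mul_of_nonneg_left base (by positivity))
        have tb : |bHstar q H (r^2*m) (r*d)| ≤ 6 * K * X :=
          hbH.trans (mul_le_mul_of_nonneg_left base (by positivity))
        exact add_le_add (mul_le_mul_of_nonneg_left ta (by positivity))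
          (mul_le_mul_of_nonneg_left tb (by positivity))
      have step3 : (2:ℝ)^(q-1) * (2 * K * X) + 4^(q-1) * (6 * K * X)
          = ((2:ℝ)^q + 6*4^(q-1)) * X * K * 1 := by
        have hq1 : q - 1 + 1 = q := by omega
        have : (2:ℝ)^q = 2^(q-1) * 2 := by
          rw [← pow_succ, hq1]
        rw [this]; ring
      calc _ ≤ _ := step1
        _ ≤ _ := step2
        _ = _ := step3
    rw [hK]; exact hd_final

end Gath
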